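/- If φ belongs to 𝓛(F^×,ψ) and α ∈ F^×, then the function x ↦ φ(αx) belongs to 𝓛(F^×,ψ) and ∫^{F^×} φ(αx) d^×x = ∫^{F^×} φ(x) d^×x. -/

import Mathlib

noncomputable section

open MeasureTheory

/-- A field `F` with a split valuation `ν : F^× → Γ` (split by `t`), with residue field `k`,
residue map `ρ : O_F → k`, where `Γ` has a minimal positive element `one`. -/
structure LiftSetup (Γ F k : Type*) [AddCommGroup Γ] [LinearOrder Γ] [IsOrderedAddMonoid Γ] [Field F] [Field k] where
  /-- the valuation (recorded on nonzero elements) -/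
  ν : F → Γ
  /-- the splitting homomorphism `t : Γ → F^×` -/
  t : Γ → F
  /-- the residue map (recorded on the valuation ring) -/
  ρ : F → k
  /-- the minimal positive element of `Γ` -/
  one : Γ
  one_pos : 0 < one
  one_min : ∀ γ : Γ, 0 < γ → one ≤ γ
  ν_mul : ∀ x y : F, x ≠ 0 → y ≠ 0 → ν (x * y) = ν x + ν y
  ν_add : ∀ x y : F, x ≠ 0 → y ≠ 0 → x + y ≠ 0 → min (ν x) (ν y) ≤ ν (x + y)
  t_ne : ∀ γ : Γ, t γ ≠ 0
  t_add : ∀ γ δ : Γ, t (γ + δ) = t γ * t δ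
  ν_t : ∀ γ : Γ, ν (t γ) = γ
  ρ_add : ∀ x y : F, (x = 0 ∨ 0 ≤ ν x) → (y = 0 ∨ 0 ≤ ν y) → ρ (x + y) = ρ x + ρ y
  ρ_mul : ∀ x y : F, (x = 0 ∨ 0 ≤ ν x) → (y = 0 ∨ 0 ≤ ν y) → ρ (x * y) = ρ x * ρ y
  ρ_one : ρ 1 = 1
  ρ_surj : ∀ u : k, ∃ x : F, (x = 0 ∨ 0 ≤ ν x) ∧ ρ x = u
  ρ_eq_zero : ∀ x : F, (x = 0 ∨ 0 ≤ ν x) → (ρ x = 0 ↔ (x = 0 ∨ 0 < ν x))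

namespace LiftSetup

variable {Γ F k : Type*} [AddCommGroup Γ] [LinearOrder Γ] [IsOrderedAddMonoid Γ] [Field F] [Field k]
variable (S : LiftSetup Γ F k)

/-- The ring of integers `O_F` of the valuation. -/
def integers : Set F := {x | x = 0 ∨ 0 ≤ S.ν x}

/-- The translated fractional ideal `a + t(γ)O_F`. -/
def fracIdeal (a : F) (γ : Γ) : Set F := {x | (x - a) * S.t (-γ) ∈ S.integers}

/-- The lift `f^{a,γ}` of a function `f` on the residue field `k`:
`f^{a,γ}(x) = f(ρ((x-a)t(-γ)))` for `x ∈ a + t(γ)O_F` and `0` otherwise. -/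
def lift {A : Type*} [Zero A] (f : k → A) (a : F) (γ : Γ) : F → A :=
  (S.fracIdeal a γ).indicator fun x => f (S.ρ ((x - a) * S.t (-γ)))

/-- The homomorphism `η : F^× → k^×`, `x ↦ ρ(x t(-ν x))`. -/
def η (x : F) : k := S.ρ (x * S.t (-S.ν x))

end LiftSetup

section CGamma

variable (Γ : Type*) [AddCommGroup Γ] [LinearOrder Γ] [IsOrderedAddMonoid Γ]

instance : IsDomain (AddMonoidAlgebra ℂ Γ) := NoZeroDivisors.to_isDomain _

/-- `ℂ(Γ)`: the field of fractions of the complex group algebra of `Γ`. -/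
abbrev CGamma : Type _ := FractionRing (AddMonoidAlgebra ℂ Γ)

/-- The canonical embedding `ℂ → ℂ(Γ)`. -/
def embC : ℂ →+* CGamma Γ :=
  (algebraMap (AddMonoidAlgebra ℂ Γ) (CGamma Γ)).comp AddMonoidAlgebra.singleZeroRingHom

variable {Γ}

/-- The basis element `X^γ` of `ℂ(Γ)`. -/
def Xp (γ : Γ) : CGamma Γ :=
  algebraMap (AddMonoidAlgebra ℂ Γ) (CGamma Γ) (AddMonoidAlgebra.single γ 1)

end CGamma

section GoodChar

variable {Γ F k : Type*} [AddCommGroup Γ] [LinearOrder Γ] [IsOrderedAddMonoid Γ] [Field F] [Field k] [TopologicalSpace k]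

/-- `ψ` is a nontrivial good character of `F` of conductor `𝔣`: a homomorphism from the
additive group of `F` to the complex unit circle, trivial on `t(𝔣)O_F`, nontrivial on
`t(𝔣-1)O_F`, whose induced map `ψ̄` on the residue field `k` (given by
`ψ̄(ρ(x)) = ψ(t(𝔣-1)x)` for `x ∈ O_F`) is well defined and continuous. -/
def LiftSetup.IsGoodCharacter (S : LiftSetup Γ F k) (ψ : F → ℂ) (𝔣 : Γ) : Prop :=
  (∀ x y : F, ψ (x + y) = ψ x * ψ y) ∧
  (∀ x : F, ‖ψ x‖ = 1) ∧
  (∀ x ∈ S.integers, ψ (S.t 𝔣 * x) = 1) ∧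
  (∃ x ∈ S.integers, ψ (S.t (𝔣 - S.one) * x) ≠ 1) ∧
  (∃ ψbar : k → ℂ, Continuous ψbar ∧
    ∀ x ∈ S.integers, ψbar (S.ρ x) = ψ (S.t (𝔣 - S.one) * x))

end GoodChar

section LFmu

variable {Γ F k : Type*} [AddCommGroup Γ] [LinearOrder Γ] [IsOrderedAddMonoid Γ] [Field F] [Field k]
  [MeasurableSpace k]

open MeasureTheory

/-- `𝓛(F)`: the `ℂ(Γ)`-span of the lifts of Haar-integrable functions on `k`. -/
def LFmu (S : LiftSetup Γ F k) (μ : Measure k) : Submodule (CGamma Γ) (F → CGamma Γ) :=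
  Submodule.span (CGamma Γ)
    {g | ∃ f : k → ℂ, Integrable f μ ∧ ∃ (a : F) (γ : Γ),
        g = S.lift (fun u => embC Γ (f u)) a γ}

theorem liftC_mem_mu (S : LiftSetup Γ F k) (μ : Measure k)
    {f : k → ℂ} (hf : Integrable f μ) (a : F) (γ : Γ) :
    S.lift (fun u => embC Γ (f u)) a γ ∈ LFmu S μ :=
  Submodule.subset_span ⟨f, hf, a, γ, rfl⟩

/-- `𝓛^γ`: the complex span of the lifts of Haar-integrable functions at height `γ`. -/
def Lheight (S : LiftSetup Γ F k) (μ : Measure k) (γ : Γ) : Submodule ℂ (F → ℂ) :=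
  Submodule.span ℂ {g | ∃ f : k → ℂ, Integrable f μ ∧ ∃ a : F, g = S.lift f a γ}

end LFmu

section LFpsi

variable {Γ F k : Type*} [AddCommGroup Γ] [LinearOrder Γ] [IsOrderedAddMonoid Γ] [Field F] [Field k]
  [MeasurableSpace k]

open MeasureTheory

/-- `𝓛(F,ψ)`: the `ℂ(Γ)`-span of the functions `f·ψ_a` for `f ∈ 𝓛(F)`, `a ∈ F`. -/
def LFpsi (S : LiftSetup Γ F k) (μ : Measure k) (ψ : F → ℂ) :
    Submodule (CGamma Γ) (F → CGamma Γ) :=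
  Submodule.span (CGamma Γ)
    {g | ∃ f ∈ LFmu S μ, ∃ a : F, g = fun x => embC Γ (ψ (a * x)) * f x}

end LFpsi

section Mult

variable {Γ F k : Type*} [AddCommGroup Γ] [LinearOrder Γ] [IsOrderedAddMonoid Γ] [Field F] [Field k]
  [MeasurableSpace k]

open MeasureTheory

/-- The absolute value `|α|_F = |η(α)|·X^{ν(α)} ∈ ℂ(Γ)` of `α ∈ F^×`. -/
noncomputable def absF (S : LiftSetup Γ F k) (abs : k → ℝ) (x : F) : CGamma Γ :=
  embC Γ ((abs (S.η x) : ℝ) : ℂ) * Xp (S.ν x)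

/-- `φ ∈ 𝓛(F^×,ψ)`: the function `x ↦ φ(x)|x|_F⁻¹` on `F^×` extends to a function
in `𝓛(F,ψ)`. -/
def MultIntegrable (S : LiftSetup Γ F k) (μ : Measure k) (ψ : F → ℂ) (abs : k → ℝ)
    (φ : F → CGamma Γ) : Prop :=
  ∃ h ∈ LFpsi S μ ψ, ∀ x : F, x ≠ 0 → h x = φ x * (absF S abs x)⁻¹

open scoped Classical in
/-- The multiplicative integral `∫^{F^×} φ(x) d^×x := ∫^F φ(x)|x|_F⁻¹ dx`. -/
noncomputable def multIntegral (S : LiftSetup Γ F k) (μ : Measure k) (ψ : F → ℂ)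
    (abs : k → ℝ) (Jext : LFpsi S μ ψ →ₗ[CGamma Γ] CGamma Γ)
    (φ : F → CGamma Γ) : CGamma Γ :=
  if hm : MultIntegrable S μ ψ abs φ then
    Jext ⟨Classical.choose hm, (Classical.choose_spec hm).1⟩
  else 0

end Mult


section Aux1

variable {Γ F k : Type*} [AddCommGroup Γ] [LinearOrder Γ] [IsOrderedAddMonoid Γ] [Field F] [Field k]
variable (S : LiftSetup Γ F k)

namespace LiftSetup

theorem t_zero : S.t 0 = 1 := by
  have h := S.t_add 0 0
  rw [add_zero] at h
  have := S.t_ne 0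
  field_simp at h
  tauto

theorem t_mul_t_neg (γ : Γ) : S.t γ * S.t (-γ) = 1 := by
  rw [← S.t_add, add_neg_cancel, S.t_zero]

theorem ν_one : S.ν 1 = 0 := by
  have h := S.ν_mul 1 1 one_ne_zero one_ne_zero
  rw [mul_one] at h
  exact left_eq_add.mp h

theorem ν_inv {x : F} (hx : x ≠ 0) : S.ν x⁻¹ = - S.ν x := by
  have h := S.ν_mul x x⁻¹ hx (inv_ne_zero hx)
  rw [mul_inv_cancel₀ hx, S.ν_one] at h
  exact eq_neg_of_add_eq_zero_right h.symm

theorem ν_neg_one : S.ν (-1 : F) = 0 := by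
  have h := S.ν_mul (-1) (-1) (by norm_num) (by norm_num)
  rw [neg_mul_neg, one_mul, S.ν_one] at h
  have h2 : S.ν (-1:F) + S.ν (-1:F) = 0 := h.symm
  rcases lt_trichotomy (S.ν (-1:F)) 0 with hl | he | hg
  · exact absurd h2 (by intro hh; exact absurd hh (ne_of_lt (by exact add_neg hl hl)))
  · exact he
  · exact absurd h2 (ne_of_gt (by exact add_pos hg hg))

theorem ν_neg {x : F} (hx : x ≠ 0) : S.ν (-x) = S.ν x := by
  have h := S.ν_mul (-1) x (by norm_num) hx
  rw [neg_one_mul] at h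
  rw [h, S.ν_neg_one, zero_add]

theorem zero_mem_integers : (0 : F) ∈ S.integers := Or.inl rfl

theorem mem_integers_of_ν {x : F} (h : 0 ≤ S.ν x) : x ∈ S.integers := Or.inr h

theorem mul_mem_integers {x y : F} (hx : x ∈ S.integers) (hy : y ∈ S.integers) :
    x * y ∈ S.integers := by
  rcases hx with hx | hx
  · exact Or.inl (by rw [hx, zero_mul])
  rcases hy with hy | hy
  · exact Or.inl (by rw [hy, mul_zero])
  by_cases h0 : x = 0
  · exact Or.inl (by rw [h0, zero_mul])
  by_cases h1 : y = 0
  · exact Or.inl (by rw [h1, mul_zero])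
  exact Or.inr (by rw [S.ν_mul x y h0 h1]; positivity)

theorem add_mem_integers {x y : F} (hx : x ∈ S.integers) (hy : y ∈ S.integers) :
    x + y ∈ S.integers := by
  by_cases h0 : x = 0
  · simpa [h0] using hy
  by_cases h1 : y = 0
  · simpa [h1] using hx
  by_cases h2 : x + y = 0
  · exact Or.inl h2
  refine Or.inr ?_
  have hle := S.ν_add x y h0 h1 h2
  rcases hx with hx | hx; · exact absurd hx h0
  rcases hy with hy | hy; · exact absurd hy h1
  exact le_trans (le_min hx hy) hle

theorem t_mem_integers {γ : Γ} (h : 0 ≤ γ) : S.t γ ∈ S.integers :=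
  S.mem_integers_of_ν (by rw [S.ν_t]; exact h)

/-- the "unit part" of a nonzero element has valuation zero -/
theorem ν_unit {x : F} (hx : x ≠ 0) : S.ν (x * S.t (-S.ν x)) = 0 := by
  rw [S.ν_mul x _ hx (S.t_ne _), S.ν_t, add_neg_cancel]

theorem η_ne_zero {x : F} (hx : x ≠ 0) : S.η x ≠ 0 := by
  intro h
  rw [η] at h
  have hu : x * S.t (-S.ν x) ≠ 0 := mul_ne_zero hx (S.t_ne _)
  have := (S.ρ_eq_zero _ (Or.inr (le_of_eq (S.ν_unit hx).symm))).mp h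
  rcases this with h' | h'
  · exact hu h'
  · rw [S.ν_unit hx] at h'; exact lt_irrefl _ h'

theorem η_mul {x y : F} (hx : x ≠ 0) (hy : y ≠ 0) : S.η (x * y) = S.η x * S.η y := by
  have hxy : x * y ≠ 0 := mul_ne_zero hx hy
  rw [η, η, η, ← S.ρ_mul _ _ (Or.inr (le_of_eq (S.ν_unit hx).symm))
    (Or.inr (le_of_eq (S.ν_unit hy).symm))]
  congr 1
  rw [S.ν_mul x y hx hy, neg_add, S.t_add]
  ring

end LiftSetup

variable (Γ) in
theorem embC_injective : Function.Injective (embC Γ) := (embC Γ).injective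

theorem embC_ne_zero {c : ℂ} (hc : c ≠ 0) : embC Γ c ≠ 0 := by
  intro h
  exact hc (embC_injective Γ (by rw [h, map_zero]))

theorem Xp_add (γ δ : Γ) : Xp (γ + δ) = (Xp γ : CGamma Γ) * Xp δ := by
  rw [Xp, Xp, Xp, ← map_mul, AddMonoidAlgebra.single_mul_single, one_mul]

theorem Xp_zero : (Xp 0 : CGamma Γ) = 1 := by
  rw [Xp]
  have : (AddMonoidAlgebra.single (0:Γ) (1:ℂ)) = 1 := rfl
  rw [this, map_one]

theorem Xp_ne_zero (γ : Γ) : (Xp γ : CGamma Γ) ≠ 0 := by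
  rw [Xp]
  intro h
  have h1 : AddMonoidAlgebra.single (γ:Γ) (1:ℂ) ≠ 0 := by
    simp [AddMonoidAlgebra.single_eq_zero]
  exact h1 <| IsFractionRing.injective (AddMonoidAlgebra ℂ Γ) (CGamma Γ) (by rw [h, map_zero])

theorem Xp_mul_Xp_neg (γ : Γ) : (Xp γ : CGamma Γ) * Xp (-γ) = 1 := by
  rw [← Xp_add, add_neg_cancel, Xp_zero]

theorem Xp_eq_one_iff (γ : Γ) : (Xp γ : CGamma Γ) = 1 ↔ γ = 0 := by
  constructor
  · intro h
    rw [Xp, ← Xp_zero (Γ := Γ), Xp] at h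
    have := IsFractionRing.injective (AddMonoidAlgebra ℂ Γ) (CGamma Γ) h
    rcases AddMonoidAlgebra.single_inj.mp this with ⟨h1, _⟩ | ⟨h1, _⟩
    · exact h1
    · exact absurd h1 one_ne_zero
  · rintro rfl; exact Xp_zero

end Aux1
section Aux2

variable {Γ F k : Type*} [AddCommGroup Γ] [LinearOrder Γ] [IsOrderedAddMonoid Γ] [Field F] [Field k]
variable (S : LiftSetup Γ F k)

namespace LiftSetup

theorem unit_mem (α : F) (hα : α ≠ 0) : α * S.t (-S.ν α) ∈ S.integers :=
  Or.inr (le_of_eq (S.ν_unit hα).symm)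

theorem unit_inv_mem (α : F) (hα : α ≠ 0) : (α * S.t (-S.ν α))⁻¹ ∈ S.integers := by
  have h1 : (α * S.t (-S.ν α))⁻¹ = α⁻¹ * S.t (S.ν α) := by
    rw [mul_inv]
    congr 1
    exact inv_eq_of_mul_eq_one_left (S.t_mul_t_neg (S.ν α))
  rw [h1]
  refine Or.inr ?_
  rw [S.ν_mul _ _ (inv_ne_zero hα) (S.t_ne _), S.ν_inv hα, S.ν_t, neg_add_cancel]

theorem key_eq (α x b : F) (γ : Γ) (hα : α ≠ 0) :
    (α * x - b) * S.t (-γ) =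
      ((x - b * α⁻¹) * S.t (-(γ - S.ν α))) * (α * S.t (-S.ν α)) := by
  have ht : S.t (-(γ - S.ν α)) * S.t (-S.ν α) = S.t (-γ) := by
    rw [← S.t_add]; congr 1; abel
  have h2 : (x - b * α⁻¹) * α = α * x - b := by field_simp
  symm
  calc ((x - b * α⁻¹) * S.t (-(γ - S.ν α))) * (α * S.t (-S.ν α))
      = ((x - b * α⁻¹) * α) * (S.t (-(γ - S.ν α)) * S.t (-S.ν α)) := by ring
    _ = (α * x - b) * S.t (-γ) := by rw [h2, ht]

theorem mem_fracIdeal_smul {α : F} (hα : α ≠ 0) (x b : F) (γ : Γ) :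
    α * x ∈ S.fracIdeal b γ ↔ x ∈ S.fracIdeal (b * α⁻¹) (γ - S.ν α) := by
  unfold fracIdeal
  simp only [Set.mem_setOf_eq]
  rw [S.key_eq α x b γ hα]
  constructor
  · intro h
    have := S.mul_mem_integers h (S.unit_inv_mem α hα)
    rwa [mul_assoc, mul_inv_cancel₀ (mul_ne_zero hα (S.t_ne _)), mul_one] at this
  · intro h
    exact S.mul_mem_integers h (S.unit_mem α hα)

theorem lift_comp_smul {A : Type*} [Zero A] (f : k → A) {α : F} (hα : α ≠ 0)
    (b : F) (γ : Γ) (x : F) :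
    S.lift f b γ (α * x) =
      S.lift (fun u => f (S.η α * u)) (b * α⁻¹) (γ - S.ν α) x := by
  unfold lift
  by_cases hx : x ∈ S.fracIdeal (b * α⁻¹) (γ - S.ν α)
  · rw [Set.indicator_of_mem hx, Set.indicator_of_mem (((S.mem_fracIdeal_smul hα x b γ)).mpr hx)]
    congr 1
    rw [S.key_eq α x b γ hα, S.ρ_mul _ _ hx (S.unit_mem α hα)]
    rw [mul_comm]
    rfl
  · rw [Set.indicator_of_notMem hx,
      Set.indicator_of_notMem (fun h => hx ((S.mem_fracIdeal_smul hα x b γ).mp h))]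

theorem lift_comp_add {A : Type*} [Zero A] (f : k → A) (b τ : F) (γ : Γ) (x : F) :
    S.lift f b γ (x + τ) = S.lift f (b - τ) γ x := by
  classical
  have h : x + τ - b = x - (b - τ) := by ring
  unfold lift fracIdeal
  rw [Set.indicator_apply, Set.indicator_apply]
  simp only [Set.mem_setOf_eq, h]

/-- For `x` in `b + t(γ)O`, either `x = b` or `γ ≤ ν (x - b)`. -/
theorem fracIdeal_val {x b : F} {γ : Γ} (hx : x ∈ S.fracIdeal b γ) :
    x - b = 0 ∨ γ ≤ S.ν (x - b) := by
  rcases hx with h | h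
  · left
    rcases mul_eq_zero.mp h with h' | h'
    · exact h'
    · exact absurd h' (S.t_ne _)
  · by_cases h0 : x - b = 0
    · exact Or.inl h0
    right
    rw [S.ν_mul _ _ h0 (S.t_ne _), S.ν_t] at h
    rwa [← sub_eq_add_neg, sub_nonneg] at h
end LiftSetup

end Aux2
section Aux3

variable {Γ F k : Type*} [AddCommGroup Γ] [LinearOrder Γ] [IsOrderedAddMonoid Γ] [Field F] [Field k]
variable (S : LiftSetup Γ F k) {ψ : F → ℂ}

theorem psi_ne_zero (habs1 : ∀ x : F, ‖ψ x‖ = 1) (x : F) : ψ x ≠ 0 := by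
  intro h
  have := habs1 x
  rw [h] at this
  simp at this

theorem psi_zero (hadd : ∀ x y : F, ψ (x + y) = ψ x * ψ y)
    (habs1 : ∀ x : F, ‖ψ x‖ = 1) : ψ 0 = 1 := by
  have h := hadd 0 0
  rw [add_zero] at h
  have h0 := psi_ne_zero habs1 0
  field_simp at h
  tauto

theorem neg_mem_integers {x : F} (hx : x ∈ S.integers) : -x ∈ S.integers := by
  by_cases h0 : x = 0
  · subst h0; simpa using S.zero_mem_integers
  rcases hx with h | h
  · exact absurd h h0
  · exact Or.inr (by rwa [S.ν_neg h0])

theorem psi_of_le (hadd : ∀ x y : F, ψ (x + y) = ψ x * ψ y)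
    (habs1 : ∀ x : F, ‖ψ x‖ = 1)
    (htriv : ∀ x ∈ S.integers, ψ (S.t S.one * x) = 1) :
    ∀ y : F, y = 0 ∨ S.one ≤ S.ν y → ψ y = 1 := by
  intro y hy
  by_cases h0 : y = 0
  · subst h0; exact psi_zero hadd habs1
  rcases hy with h | h
  · exact absurd h h0
  have hmem : y * S.t (-S.one) ∈ S.integers := by
    refine Or.inr ?_
    rw [S.ν_mul _ _ h0 (S.t_ne _), S.ν_t, ← sub_eq_add_neg, sub_nonneg]
    exact h
  have := htriv _ hmem
  rwa [show S.t S.one * (y * S.t (-S.one)) = y by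
    rw [mul_comm (S.t S.one), mul_assoc]
    rw [mul_comm (S.t (-S.one))]
    rw [S.t_mul_t_neg, mul_one]] at this

theorem psibar_spec {ψbar : k → ℂ}
    (hspec : ∀ x ∈ S.integers, ψbar (S.ρ x) = ψ (S.t (S.one - S.one) * x)) :
    ∀ x ∈ S.integers, ψbar (S.ρ x) = ψ x := by
  intro x hx
  rw [hspec x hx, sub_self, S.t_zero, one_mul]

theorem psibar_abs {ψbar : k → ℂ} (habs1 : ∀ x : F, ‖ψ x‖ = 1)
    (hspec' : ∀ x ∈ S.integers, ψbar (S.ρ x) = ψ x) (v : k) :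
    ‖ψbar v‖ = 1 := by
  obtain ⟨x, hx, rfl⟩ := S.ρ_surj v
  rw [hspec' x hx]
  exact habs1 x

end Aux3

section Aux4

open MeasureTheory

variable {Γ F k : Type*} [AddCommGroup Γ] [LinearOrder Γ] [IsOrderedAddMonoid Γ] [Field F] [Field k]
  [MeasurableSpace k]
variable (S : LiftSetup Γ F k) (μ : Measure k) {ψ : F → ℂ}

/-- membership of a simple generator in `LFpsi` -/
theorem gen_mem_LFpsi (ψ : F → ℂ) {f : k → ℂ} (hf : Integrable f μ) (a b : F) (γ : Γ) :
    (fun x => embC Γ (ψ (a * x)) * S.lift (fun u => embC Γ (f u)) b γ x) ∈ LFpsi S μ ψ :=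
  Submodule.subset_span ⟨_, liftC_mem_mu S μ hf b γ, a, rfl⟩

theorem scale_mem_LFmu
    (hscale : ∀ f : k → ℂ, Integrable f μ → ∀ c : k, c ≠ 0 → Integrable (fun u => f (c * u)) μ)
    {α : F} (hα : α ≠ 0) {g : F → CGamma Γ} (hg : g ∈ LFmu S μ) :
    (fun x => g (α * x)) ∈ LFmu S μ := by
  induction hg using Submodule.span_induction with
  | mem g hgen =>
    obtain ⟨f, hf, b, γ, rfl⟩ := hgen
    have heq : (fun x => S.lift (fun u => embC Γ (f u)) b γ (α * x)) =
        S.lift (fun u => embC Γ (f (S.η α * u))) (b * α⁻¹) (γ - S.ν α) := by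
      funext x
      exact S.lift_comp_smul (fun u => embC Γ (f u)) hα b γ x
    rw [heq]
    exact liftC_mem_mu S μ (hscale f hf _ (S.η_ne_zero hα)) _ _
  | zero => exact Submodule.zero_mem _
  | add g h _ _ ihg ihh => exact Submodule.add_mem _ ihg ihh
  | smul c g _ ihg => exact Submodule.smul_mem _ c ihg

theorem scale_mem_LFpsi
    (hscale : ∀ f : k → ℂ, Integrable f μ → ∀ c : k, c ≠ 0 → Integrable (fun u => f (c * u)) μ)
    {α : F} (hα : α ≠ 0) {g : F → CGamma Γ} (hg : g ∈ LFpsi S μ ψ) :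
    (fun x => g (α * x)) ∈ LFpsi S μ ψ := by
  induction hg using Submodule.span_induction with
  | mem g hgen =>
    obtain ⟨f, hf, a, rfl⟩ := hgen
    refine Submodule.subset_span ⟨fun x => f (α * x), scale_mem_LFmu S μ hscale hα hf, a * α, ?_⟩
    funext x
    rw [mul_assoc]
  | zero => exact Submodule.zero_mem _
  | add g h _ _ ihg ihh => exact Submodule.add_mem _ ihg ihh
  | smul c g _ ihg => exact Submodule.smul_mem _ c ihg

theorem translate_mem_LFmu (τ : F) {g : F → CGamma Γ} (hg : g ∈ LFmu S μ) :
    (fun x => g (x + τ)) ∈ LFmu S μ := by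
  induction hg using Submodule.span_induction with
  | mem g hgen =>
    obtain ⟨f, hf, b, γ, rfl⟩ := hgen
    have heq : (fun x => S.lift (fun u => embC Γ (f u)) b γ (x + τ)) =
        S.lift (fun u => embC Γ (f u)) (b - τ) γ := by
      funext x
      exact S.lift_comp_add (fun u => embC Γ (f u)) b τ γ x
    rw [heq]
    exact liftC_mem_mu S μ hf _ _
  | zero => exact Submodule.zero_mem _
  | add g h _ _ ihg ihh => exact Submodule.add_mem _ ihg ihh
  | smul c g _ ihg => exact Submodule.smul_mem _ c ihg

theorem translate_mem_LFpsi (hadd : ∀ x y : F, ψ (x + y) = ψ x * ψ y)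
    (τ : F) {g : F → CGamma Γ} (hg : g ∈ LFpsi S μ ψ) :
    (fun x => g (x + τ)) ∈ LFpsi S μ ψ := by
  induction hg using Submodule.span_induction with
  | mem g hgen =>
    obtain ⟨f, hf, a, rfl⟩ := hgen
    have heq : (fun x => embC Γ (ψ (a * (x + τ))) * f (x + τ)) =
        embC Γ (ψ (a * τ)) • fun x => embC Γ (ψ (a * x)) * f (x + τ) := by
      funext x
      have : a * (x + τ) = a * x + a * τ := by ring
      rw [this, hadd]
      simp only [Pi.smul_apply, smul_eq_mul, map_mul]
      ring
    rw [heq]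
    refine Submodule.smul_mem _ _ ?_
    exact Submodule.subset_span ⟨fun x => f (x + τ), translate_mem_LFmu S μ τ hf, a, rfl⟩
  | zero => exact Submodule.zero_mem _
  | add g h _ _ ihg ihh => exact Submodule.add_mem _ ihg ihh
  | smul c g _ ihg => exact Submodule.smul_mem _ c ihg

/-- `LFpsi` is the span of the simple generators `ψ_a · f^{b,γ}`. -/
theorem LFpsi_eq_span (ψ : F → ℂ) : LFpsi S μ ψ = Submodule.span (CGamma Γ)
    {g | ∃ f : k → ℂ, Integrable f μ ∧ ∃ (a b : F) (γ : Γ),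
      g = fun x => embC Γ (ψ (a * x)) * S.lift (fun u => embC Γ (f u)) b γ x} := by
  apply le_antisymm
  · rw [LFpsi, Submodule.span_le]
    rintro g ⟨f, hf, a, rfl⟩
    induction hf using Submodule.span_induction with
    | mem f hgen =>
      obtain ⟨f0, hf0, b, γ, rfl⟩ := hgen
      exact Submodule.subset_span ⟨f0, hf0, a, b, γ, rfl⟩
    | zero =>
      have : (fun x => embC Γ (ψ (a * x)) * (0 : F → CGamma Γ) x) = 0 := by
        funext x; simp
      rw [this]
      exact Submodule.zero_mem _
    | add g h _ _ ihg ihh =>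
      have : (fun x => embC Γ (ψ (a * x)) * (g + h) x) =
          (fun x => embC Γ (ψ (a * x)) * g x) + (fun x => embC Γ (ψ (a * x)) * h x) := by
        funext x; simp [mul_add]
      rw [this]
      exact Submodule.add_mem _ ihg ihh
    | smul c g _ ihg =>
      have : (fun x => embC Γ (ψ (a * x)) * (c • g) x) =
          c • fun x => embC Γ (ψ (a * x)) * g x := by
        funext x
        simp only [Pi.smul_apply, smul_eq_mul]
        ring
      rw [this]
      exact Submodule.smul_mem _ c ihg
  · rw [Submodule.span_le]
    rintro g ⟨f, hf, a, b, γ, rfl⟩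
    exact gen_mem_LFpsi S μ ψ hf a b γ

end Aux4
set_option linter.unusedSectionVars false

section Aux5

open MeasureTheory

variable {Γ F k : Type*} [AddCommGroup Γ] [LinearOrder Γ] [IsOrderedAddMonoid Γ] [Field F] [Field k]
  [TopologicalSpace k] [IsTopologicalRing k] [MeasurableSpace k] [BorelSpace k]
variable (S : LiftSetup Γ F k) (μ : Measure k) {ψ : F → ℂ}
variable (Jext : LFpsi S μ ψ →ₗ[CGamma Γ] CGamma Γ)

theorem lift_mem_LFpsi (hψ0 : ψ 0 = 1) {f : k → ℂ} (hf : Integrable f μ) (b : F) (γ : Γ) :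
    S.lift (fun u => embC Γ (f u)) b γ ∈ LFpsi S μ ψ := by
  have h := gen_mem_LFpsi S μ ψ hf 0 b γ
  have e : (fun x => embC Γ (ψ (0 * x)) * S.lift (fun u => embC Γ (f u)) b γ x) =
      S.lift (fun u => embC Γ (f u)) b γ := by
    funext x
    rw [zero_mul, hψ0, map_one, one_mul]
  rwa [e] at h

theorem Jext_gen_const
    (hJext : ∀ (f : k → ℂ) (hf : Integrable f μ) (a : F) (γ : Γ)
      (hmem : S.lift (fun u => embC Γ (f u)) a γ ∈ LFpsi S μ ψ),
      Jext ⟨S.lift (fun u => embC Γ (f u)) a γ, hmem⟩ = embC Γ (∫ u, f u ∂μ) * Xp γ)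
    (hψ0 : ψ 0 = 1)
    {f : k → ℂ} (hf : Integrable f μ) {a b : F} {γ : Γ}
    (hconst : ∀ x ∈ S.fracIdeal b γ, ψ (a * x) = ψ (a * b))
    (hmem : (fun x => embC Γ (ψ (a * x)) * S.lift (fun u => embC Γ (f u)) b γ x) ∈ LFpsi S μ ψ) :
    Jext ⟨fun x => embC Γ (ψ (a * x)) * S.lift (fun u => embC Γ (f u)) b γ x, hmem⟩ =
      embC Γ (ψ (a * b)) * (embC Γ (∫ u, f u ∂μ) * Xp γ) := by
  have key : (fun x => embC Γ (ψ (a * x)) * S.lift (fun u => embC Γ (f u)) b γ x) =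
      embC Γ (ψ (a * b)) • S.lift (fun u => embC Γ (f u)) b γ := by
    funext x
    by_cases hx : x ∈ S.fracIdeal b γ
    · rw [hconst x hx]
      rfl
    · have h0 : S.lift (fun u => embC Γ (f u)) b γ x = 0 := by
        rw [LiftSetup.lift, Set.indicator_of_notMem hx]
      simp [h0]
  have e : (⟨_, hmem⟩ : LFpsi S μ ψ) =
      embC Γ (ψ (a * b)) • ⟨S.lift (fun u => embC Γ (f u)) b γ, lift_mem_LFpsi S μ hψ0 hf b γ⟩ :=
    Subtype.ext key
  rw [e, _root_.map_smul, hJext f hf b γ, smul_eq_mul]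

theorem hconst_of_le (hadd : ∀ x y : F, ψ (x + y) = ψ x * ψ y)
    (habs1 : ∀ x : F, ‖ψ x‖ = 1)
    (htriv : ∀ x ∈ S.integers, ψ (S.t S.one * x) = 1)
    {a b : F} {γ : Γ} (ha : a ≠ 0) (h : S.one ≤ S.ν a + γ) :
    ∀ x ∈ S.fracIdeal b γ, ψ (a * x) = ψ (a * b) := by
  intro x hx
  have h1 := S.fracIdeal_val hx
  have hsplit : a * x = a * (x - b) + a * b := by ring
  rw [hsplit, hadd]
  have hy : a * (x - b) = 0 ∨ S.one ≤ S.ν (a * (x - b)) := by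
    by_cases h2 : x - b = 0
    · exact Or.inl (by rw [h2, mul_zero])
    rcases h1 with h1 | h1
    · exact absurd h1 h2
    · refine Or.inr ?_
      rw [S.ν_mul a _ ha h2]
      exact le_trans h (add_le_add_right h1 (S.ν a))
  rw [psi_of_le S hadd habs1 htriv _ hy, one_mul]

theorem hconst_of_zero (a b : F) {γ : Γ} (ha : a = 0) :
    ∀ x ∈ S.fracIdeal b γ, ψ (a * x) = ψ (a * b) := by
  intro x _
  rw [ha, zero_mul, zero_mul]

theorem integrable_psibar_mul (ψbar : k → ℂ) (hψbarC : Continuous ψbar)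
    (habsbar : ∀ v : k, ‖ψbar v‖ = 1)
    {f : k → ℂ} (hf : Integrable f μ) (c : k) :
    Integrable (fun u => ψbar (c * u) * f u) μ := by
  refine hf.bdd_mul (c := 1) ?_ (Filter.Eventually.of_forall fun u => ?_)
  · exact (hψbarC.comp (continuous_const.mul continuous_id)).aestronglyMeasurable
  · rw [habsbar]

theorem Jext_gen_unit
    (hJext : ∀ (f : k → ℂ) (hf : Integrable f μ) (a : F) (γ : Γ)
      (hmem : S.lift (fun u => embC Γ (f u)) a γ ∈ LFpsi S μ ψ),
      Jext ⟨S.lift (fun u => embC Γ (f u)) a γ, hmem⟩ = embC Γ (∫ u, f u ∂μ) * Xp γ)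
    (hadd : ∀ x y : F, ψ (x + y) = ψ x * ψ y)
    (habs1 : ∀ x : F, ‖ψ x‖ = 1)
    (ψbar : k → ℂ) (hψbarC : Continuous ψbar)
    (hspec' : ∀ x ∈ S.integers, ψbar (S.ρ x) = ψ x)
    {f : k → ℂ} (hf : Integrable f μ) {a b : F} {γ : Γ}
    (ha : a ≠ 0) (hν : S.ν a + γ = 0)
    (hmem : (fun x => embC Γ (ψ (a * x)) * S.lift (fun u => embC Γ (f u)) b γ x) ∈ LFpsi S μ ψ) :
    Jext ⟨fun x => embC Γ (ψ (a * x)) * S.lift (fun u => embC Γ (f u)) b γ x, hmem⟩ =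
      embC Γ (ψ (a * b)) *
        (embC Γ (∫ u, ψbar (S.ρ (a * S.t γ) * u) * f u ∂μ) * Xp γ) := by
  have hψ0 : ψ 0 = 1 := psi_zero hadd habs1
  have hatO : a * S.t γ ∈ S.integers := by
    refine Or.inr ?_
    rw [S.ν_mul a _ ha (S.t_ne _), S.ν_t, hν]
  have hg : Integrable (fun u => ψbar (S.ρ (a * S.t γ) * u) * f u) μ :=
    integrable_psibar_mul μ ψbar hψbarC (psibar_abs S habs1 hspec') hf _
  have key : (fun x => embC Γ (ψ (a * x)) * S.lift (fun u => embC Γ (f u)) b γ x) =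
      embC Γ (ψ (a * b)) •
        S.lift (fun u => embC Γ (ψbar (S.ρ (a * S.t γ) * u) * f u)) b γ := by
    funext x
    by_cases hx : x ∈ S.fracIdeal b γ
    · have hu : (x - b) * S.t (-γ) ∈ S.integers := hx
      have hax : a * x = (a * S.t γ) * ((x - b) * S.t (-γ)) + a * b := by
        have : (a * S.t γ) * ((x - b) * S.t (-γ)) = a * (x - b) * (S.t γ * S.t (-γ)) := by ring
        rw [this, S.t_mul_t_neg, mul_one]
        ring
      have hA : (a * S.t γ) * ((x - b) * S.t (-γ)) ∈ S.integers :=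
        S.mul_mem_integers hatO hu
      have hpsiA : ψ ((a * S.t γ) * ((x - b) * S.t (-γ))) =
          ψbar (S.ρ (a * S.t γ) * S.ρ ((x - b) * S.t (-γ))) := by
        rw [← S.ρ_mul _ _ hatO hu, hspec' _ hA]
      have hlift : S.lift (fun u => embC Γ (f u)) b γ x =
          embC Γ (f (S.ρ ((x - b) * S.t (-γ)))) := by
        rw [LiftSetup.lift, Set.indicator_of_mem hx]
      have hlift2 : S.lift (fun u => embC Γ (ψbar (S.ρ (a * S.t γ) * u) * f u)) b γ x =
          embC Γ (ψbar (S.ρ (a * S.t γ) * S.ρ ((x - b) * S.t (-γ))) *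
            f (S.ρ ((x - b) * S.t (-γ)))) := by
        rw [LiftSetup.lift, Set.indicator_of_mem hx]
      rw [hax, hadd, hpsiA, hlift, Pi.smul_apply, smul_eq_mul, hlift2, map_mul, map_mul]
      ring
    · have h0 : S.lift (fun u => embC Γ (f u)) b γ x = 0 := by
        rw [LiftSetup.lift, Set.indicator_of_notMem hx]
      have h0' : S.lift (fun u => embC Γ (ψbar (S.ρ (a * S.t γ) * u) * f u)) b γ x = 0 := by
        rw [LiftSetup.lift, Set.indicator_of_notMem hx]
      rw [h0, mul_zero, Pi.smul_apply, h0', smul_zero]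
  have e : (⟨_, hmem⟩ : LFpsi S μ ψ) = embC Γ (ψ (a * b)) •
      ⟨S.lift (fun u => embC Γ (ψbar (S.ρ (a * S.t γ) * u) * f u)) b γ,
        lift_mem_LFpsi S μ hψ0 hg b γ⟩ := Subtype.ext key
  rw [e, _root_.map_smul, hJext _ hg b γ, smul_eq_mul]

theorem Jext_gen_zero
    (hJinv : ∀ (g : F → CGamma Γ) (hg : g ∈ LFpsi S μ ψ) (τ : F)
      (hg' : (fun x => g (x + τ)) ∈ LFpsi S μ ψ),
      Jext ⟨fun x => g (x + τ), hg'⟩ = Jext ⟨g, hg⟩)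
    (hadd : ∀ x y : F, ψ (x + y) = ψ x * ψ y)
    (habs1 : ∀ x : F, ‖ψ x‖ = 1)
    {x₀ : F} (hx₀O : x₀ ∈ S.integers) (hx₀ : ψ x₀ ≠ 1)
    {f : k → ℂ} {a b : F} {γ : Γ}
    (ha : a ≠ 0) (hν : S.ν a + γ < 0)
    (hmem : (fun x => embC Γ (ψ (a * x)) * S.lift (fun u => embC Γ (f u)) b γ x) ∈ LFpsi S μ ψ) :
    Jext ⟨fun x => embC Γ (ψ (a * x)) * S.lift (fun u => embC Γ (f u)) b γ x, hmem⟩ = 0 := by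
  have hx₀ne : x₀ ≠ 0 := by
    intro h
    exact hx₀ (h ▸ psi_zero hadd habs1)
  have hx₀nonneg : 0 ≤ S.ν x₀ := by
    rcases hx₀O with h | h
    · exact absurd h hx₀ne
    · exact h
  set τ := x₀ * a⁻¹ with hτdef
  have hτne : τ ≠ 0 := mul_ne_zero hx₀ne (inv_ne_zero ha)
  have haτ : a * τ = x₀ := by
    rw [hτdef]; field_simp
  have hν1 : S.one ≤ -(S.ν a + γ) := S.one_min _ (by rwa [neg_pos])
  have hνd : S.ν (τ * S.t (-γ)) = S.ν x₀ - S.ν a - γ := by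
    rw [S.ν_mul _ _ hτne (S.t_ne _), S.ν_t, S.ν_mul _ _ hx₀ne (inv_ne_zero ha), S.ν_inv ha]
    abel
  have hdpos : 0 < S.ν (τ * S.t (-γ)) := by
    rw [hνd]
    have h2 : -(S.ν a + γ) ≤ S.ν x₀ - S.ν a - γ := by
      rw [← sub_nonneg]
      have : S.ν x₀ - S.ν a - γ - -(S.ν a + γ) = S.ν x₀ := by abel
      rw [this]
      exact hx₀nonneg
    calc (0 : Γ) < S.one := S.one_pos
      _ ≤ -(S.ν a + γ) := hν1
      _ ≤ _ := h2
  have hdO : τ * S.t (-γ) ∈ S.integers := Or.inr (le_of_lt hdpos)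
  have hρd : S.ρ (τ * S.t (-γ)) = 0 :=
    (S.ρ_eq_zero _ hdO).mpr (Or.inr hdpos)
  -- the lift is invariant under translation by τ
  have hlift : ∀ x, S.lift (fun u => embC Γ (f u)) b γ (x + τ) =
      S.lift (fun u => embC Γ (f u)) b γ x := by
    intro x
    have hzτ : (x + τ - b) * S.t (-γ) = (x - b) * S.t (-γ) + τ * S.t (-γ) := by ring
    have hmem_iff : (x + τ) ∈ S.fracIdeal b γ ↔ x ∈ S.fracIdeal b γ := by
      unfold LiftSetup.fracIdeal
      simp only [Set.mem_setOf_eq, hzτ]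
      constructor
      · intro h
        have := S.add_mem_integers h (neg_mem_integers S hdO)
        rwa [add_assoc, add_neg_cancel, add_zero] at this
      · intro h
        exact S.add_mem_integers h hdO
    by_cases hx : x ∈ S.fracIdeal b γ
    · rw [LiftSetup.lift, Set.indicator_of_mem (hmem_iff.mpr hx), Set.indicator_of_mem hx]
      congr 1
      rw [hzτ, S.ρ_add _ _ hx hdO, hρd, add_zero]
    · rw [LiftSetup.lift, Set.indicator_of_notMem (fun h => hx (hmem_iff.mp h)),
        Set.indicator_of_notMem hx]
  have hGt : (fun x => embC Γ (ψ (a * (x + τ))) * S.lift (fun u => embC Γ (f u)) b γ (x + τ)) =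
      embC Γ (ψ x₀) • fun x => embC Γ (ψ (a * x)) * S.lift (fun u => embC Γ (f u)) b γ x := by
    funext x
    have : a * (x + τ) = a * x + x₀ := by rw [mul_add, haτ]
    rw [this, hadd, hlift x]
    simp only [Pi.smul_apply, smul_eq_mul, map_mul]
    ring
  have hshift : (fun x => (fun y => embC Γ (ψ (a * y)) * S.lift (fun u => embC Γ (f u)) b γ y)
      (x + τ)) ∈ LFpsi S μ ψ := by
    simp only []
    rw [hGt]
    exact Submodule.smul_mem _ _ hmem
  have e1 := hJinv _ hmem τ hshift
  have e2 : (⟨_, hshift⟩ : LFpsi S μ ψ) = embC Γ (ψ x₀) • ⟨_, hmem⟩ := Subtype.ext hGt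
  rw [e2, _root_.map_smul, smul_eq_mul] at e1
  have e3 : (embC Γ (ψ x₀) - 1) * Jext ⟨_, hmem⟩ = 0 := by
    rw [sub_mul, one_mul, e1, sub_self]
  rcases mul_eq_zero.mp e3 with h | h
  · exfalso
    apply hx₀
    have : embC Γ (ψ x₀) = embC Γ 1 := by rw [map_one]; exact sub_eq_zero.mp h
    exact embC_injective Γ this
  · exact h

end Aux5
section Aux6

open MeasureTheory

variable {Γ F k : Type*} [AddCommGroup Γ] [LinearOrder Γ] [IsOrderedAddMonoid Γ] [Field F] [Field k]
  [TopologicalSpace k] [IsTopologicalRing k] [MeasurableSpace k] [BorelSpace k]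
variable (S : LiftSetup Γ F k) (μ : Measure k) {ψ : F → ℂ}
variable (Jext : LFpsi S μ ψ →ₗ[CGamma Γ] CGamma Γ)

theorem exists_integral_ne_zero [LocallyCompactSpace k] [μ.IsAddHaarMeasure] :
    ∃ g : k → ℂ, Integrable g μ ∧ ∫ u, g u ∂μ ≠ 0 := by
  obtain ⟨K, hK, hKnhds⟩ := exists_compact_mem_nhds (0 : k)
  have hUopen : IsOpen (interior K) := isOpen_interior
  have h0U : (0 : k) ∈ interior K := mem_interior_iff_mem_nhds.mpr hKnhds
  have hpos : 0 < μ (interior K) := hUopen.measure_pos μ ⟨0, h0U⟩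
  have hfin : μ (interior K) < ⊤ := lt_of_le_of_lt (measure_mono interior_subset) hK.measure_lt_top
  refine ⟨(interior K).indicator (fun _ => (1 : ℂ)), ?_, ?_⟩
  · rw [integrable_indicator_iff hUopen.measurableSet]
    exact integrableOn_const hfin.ne
  · rw [integral_indicator_const _ hUopen.measurableSet, Complex.real_smul, mul_one]
    intro h
    rw [Complex.ofReal_eq_zero] at h
    exact (ENNReal.toReal_ne_zero.mpr ⟨ne_of_gt hpos, ne_of_lt hfin⟩) h

variable {abs : k → ℝ}

theorem abs_one_eq
    (habs : ∀ (g : k → ℂ), Integrable g μ → ∀ c : k, c ≠ 0 →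
      Integrable (fun u => g (c * u)) μ ∧ (∫ u, g (c * u) ∂μ) = (abs c)⁻¹ • ∫ u, g u ∂μ)
    (hgex : ∃ g : k → ℂ, Integrable g μ ∧ ∫ u, g u ∂μ ≠ 0) :
    abs (1 : k) = 1 := by
  obtain ⟨g, hg, hI⟩ := hgex
  have h := (habs g hg 1 one_ne_zero).2
  have e : (fun u => g (1 * u)) = g := by funext u; rw [one_mul]
  rw [e] at h
  have h2 : ((abs (1:k))⁻¹ - 1) • ∫ u, g u ∂μ = 0 := by
    rw [sub_smul, one_smul, ← h, sub_self]
  rcases smul_eq_zero.mp h2 with h3 | h3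
  · have : (abs (1:k))⁻¹ = 1 := by linarith [sub_eq_zero.mp (by linarith [h3] : (abs (1:k))⁻¹ - 1 = 0)]
    rwa [inv_eq_one] at this
  · exact absurd h3 hI

theorem abs_mul_eq
    (habs_pos : ∀ c : k, c ≠ 0 → 0 < abs c)
    (habs : ∀ (g : k → ℂ), Integrable g μ → ∀ c : k, c ≠ 0 →
      Integrable (fun u => g (c * u)) μ ∧ (∫ u, g (c * u) ∂μ) = (abs c)⁻¹ • ∫ u, g u ∂μ)
    (hgex : ∃ g : k → ℂ, Integrable g μ ∧ ∫ u, g u ∂μ ≠ 0)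
    {c d : k} (hc : c ≠ 0) (hd : d ≠ 0) :
    abs (c * d) = abs c * abs d := by
  obtain ⟨g, hg, hI⟩ := hgex
  have h1 := (habs g hg (c * d) (mul_ne_zero hc hd)).2
  have hgc := habs g hg c hc
  have h2 := (habs (fun u => g (c * u)) hgc.1 d hd).2
  beta_reduce at h2
  have e : (fun u => g (c * d * u)) = fun u => g (c * (d * u)) := by
    funext u; rw [mul_assoc]
  rw [e] at h1
  rw [h1, hgc.2, smul_smul] at h2
  have h3 : ((abs (c * d))⁻¹ - (abs d)⁻¹ * (abs c)⁻¹) • ∫ u, g u ∂μ = 0 := by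
    rw [sub_smul, ← h2, sub_self]
  rcases smul_eq_zero.mp h3 with h4 | h4
  · have h5 : (abs (c * d))⁻¹ = (abs d)⁻¹ * (abs c)⁻¹ := by linarith [sub_eq_zero.mp (by linarith : (abs (c*d))⁻¹ - (abs d)⁻¹ * (abs c)⁻¹ = 0)]
    have h6 : abs (c * d) = ((abs d)⁻¹ * (abs c)⁻¹)⁻¹ := by
      rw [← h5, inv_inv]
    rw [h6, mul_inv, inv_inv, inv_inv, mul_comm]
  · exact absurd h4 hI

theorem absF_ne_zero (habs_pos : ∀ c : k, c ≠ 0 → 0 < abs c) {x : F} (hx : x ≠ 0) :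
    absF S abs x ≠ 0 := by
  refine mul_ne_zero (embC_ne_zero ?_) (Xp_ne_zero _)
  rw [Complex.ofReal_ne_zero]
  exact ne_of_gt (habs_pos _ (S.η_ne_zero hx))

theorem absF_mul (habsm : ∀ {c d : k}, c ≠ 0 → d ≠ 0 → abs (c * d) = abs c * abs d)
    {x y : F} (hx : x ≠ 0) (hy : y ≠ 0) :
    absF S abs (x * y) = absF S abs x * absF S abs y := by
  rw [absF, absF, absF, S.η_mul hx hy, habsm (S.η_ne_zero hx) (S.η_ne_zero hy),
    S.ν_mul x y hx hy, Xp_add, Complex.ofReal_mul, map_mul]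
  ring

end Aux6
section Aux7

open MeasureTheory

variable {Γ F k : Type*} [AddCommGroup Γ] [LinearOrder Γ] [IsOrderedAddMonoid Γ] [Field F] [Field k]
  [TopologicalSpace k] [IsTopologicalRing k] [MeasurableSpace k] [BorelSpace k]
variable (S : LiftSetup Γ F k) (μ : Measure k) {ψ : F → ℂ} {abs : k → ℝ}
variable (Jext : LFpsi S μ ψ →ₗ[CGamma Γ] CGamma Γ)

theorem Jext_gen_scale
    (hJext : ∀ (f : k → ℂ) (hf : Integrable f μ) (a : F) (γ : Γ)
      (hmem : S.lift (fun u => embC Γ (f u)) a γ ∈ LFpsi S μ ψ),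
      Jext ⟨S.lift (fun u => embC Γ (f u)) a γ, hmem⟩ = embC Γ (∫ u, f u ∂μ) * Xp γ)
    (hJinv : ∀ (g : F → CGamma Γ) (hg : g ∈ LFpsi S μ ψ) (τ : F)
      (hg' : (fun x => g (x + τ)) ∈ LFpsi S μ ψ),
      Jext ⟨fun x => g (x + τ), hg'⟩ = Jext ⟨g, hg⟩)
    (hadd : ∀ x y : F, ψ (x + y) = ψ x * ψ y)
    (habs1 : ∀ x : F, ‖ψ x‖ = 1)
    (htriv : ∀ x ∈ S.integers, ψ (S.t S.one * x) = 1)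
    {x₀ : F} (hx₀O : x₀ ∈ S.integers) (hx₀ : ψ x₀ ≠ 1)
    (ψbar : k → ℂ) (hψbarC : Continuous ψbar)
    (hspec' : ∀ x ∈ S.integers, ψbar (S.ρ x) = ψ x)
    (habs_pos : ∀ c : k, c ≠ 0 → 0 < abs c)
    (habs : ∀ (g : k → ℂ), Integrable g μ → ∀ c : k, c ≠ 0 →
      Integrable (fun u => g (c * u)) μ ∧ (∫ u, g (c * u) ∂μ) = (abs c)⁻¹ • ∫ u, g u ∂μ)
    {α : F} (hα : α ≠ 0)
    {f : k → ℂ} (hf : Integrable f μ) (a b : F) (γ : Γ)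
    (hm2 : (fun x => embC Γ (ψ (a * (α * x))) *
      S.lift (fun u => embC Γ (f u)) b γ (α * x)) ∈ LFpsi S μ ψ)
    (hm1 : (fun x => embC Γ (ψ (a * x)) *
      S.lift (fun u => embC Γ (f u)) b γ x) ∈ LFpsi S μ ψ) :
    Jext ⟨_, hm2⟩ = (absF S abs α)⁻¹ * Jext ⟨_, hm1⟩ := by
  have hψ0 : ψ 0 = 1 := psi_zero hadd habs1
  have hηα : S.η α ≠ 0 := S.η_ne_zero hα
  have habsηα : abs (S.η α) ≠ 0 := ne_of_gt (habs_pos _ hηα)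
  have hXinv : (absF S abs α)⁻¹ =
      embC Γ (((abs (S.η α))⁻¹ : ℝ) : ℂ) * Xp (-S.ν α) := by
    rw [absF, mul_inv]
    congr 1
    · rw [← map_inv₀, Complex.ofReal_inv]
    · exact inv_eq_of_mul_eq_one_right (Xp_mul_Xp_neg _)
  have hXsplit : (Xp (γ - S.ν α) : CGamma Γ) = Xp γ * Xp (-S.ν α) := by
    rw [sub_eq_add_neg, Xp_add]
  have hGα : (fun x => embC Γ (ψ (a * (α * x))) * S.lift (fun u => embC Γ (f u)) b γ (α * x))
      = fun x => embC Γ (ψ ((a * α) * x)) *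
          S.lift (fun u => embC Γ (f (S.η α * u))) (b * α⁻¹) (γ - S.ν α) x := by
    funext x
    rw [← mul_assoc, S.lift_comp_smul (fun u => embC Γ (f u)) hα b γ x]
  have hm2' : (fun x => embC Γ (ψ ((a * α) * x)) *
      S.lift (fun u => embC Γ (f (S.η α * u))) (b * α⁻¹) (γ - S.ν α) x) ∈ LFpsi S μ ψ := by
    rw [← hGα]; exact hm2
  have esub : (⟨_, hm2⟩ : LFpsi S μ ψ) = ⟨_, hm2'⟩ := Subtype.ext hGα
  rw [esub]
  have hf₂ : Integrable (fun u => f (S.η α * u)) μ := (habs f hf _ hηα).1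
  by_cases ha : a = 0
  · rw [Jext_gen_const S μ Jext hJext hψ0 hf₂
        (hconst_of_zero S (a * α) (b * α⁻¹) (by rw [ha, zero_mul])) hm2',
      Jext_gen_const S μ Jext hJext hψ0 hf (hconst_of_zero S a b ha) hm1]
    have hint := (habs f hf _ hηα).2
    rw [Complex.real_smul] at hint
    rw [hint, hXinv, hXsplit, map_mul, Complex.ofReal_inv, ha, zero_mul, zero_mul]
    ring
  have haα : a * α ≠ 0 := mul_ne_zero ha hα
  have hcc : S.ν (a * α) + (γ - S.ν α) = S.ν a + γ := by
    rw [S.ν_mul a α ha hα]; abel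
  have hab : a * α * (b * α⁻¹) = a * b := by field_simp
  rcases lt_trichotomy (S.ν a + γ) 0 with hcase | hcase | hcase
  · rw [Jext_gen_zero S μ Jext hJinv hadd habs1 hx₀O hx₀ haα
        (by rw [hcc]; exact hcase) hm2',
      Jext_gen_zero S μ Jext hJinv hadd habs1 hx₀O hx₀ ha hcase hm1, mul_zero]
  · -- the unit case
    have hatO : a * S.t γ ∈ S.integers := by
      refine Or.inr ?_
      rw [S.ν_mul a _ ha (S.t_ne _), S.ν_t, hcase]
    have hρsplit : S.ρ (a * α * S.t (γ - S.ν α)) = S.ρ (a * S.t γ) * S.η α := by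
      have h1 : a * α * S.t (γ - S.ν α) = (a * S.t γ) * (α * S.t (-S.ν α)) := by
        rw [sub_eq_add_neg, S.t_add]; ring
      rw [h1, S.ρ_mul _ _ hatO (S.unit_mem α hα)]
      rfl
    have hg : Integrable (fun u => ψbar (S.ρ (a * S.t γ) * u) * f u) μ :=
      integrable_psibar_mul μ ψbar hψbarC (psibar_abs S habs1 hspec') hf _
    rw [Jext_gen_unit S μ Jext hJext hadd habs1 ψbar hψbarC hspec' hf₂ haα
        (hcc.trans hcase) hm2',
      Jext_gen_unit S μ Jext hJext hadd habs1 ψbar hψbarC hspec' hf ha hcase hm1]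
    beta_reduce
    have hint := (habs _ hg _ hηα).2
    beta_reduce at hint
    have hkey : (fun u => ψbar (S.ρ (a * α * S.t (γ - S.ν α)) * u) * f (S.η α * u))
        = fun u => ψbar (S.ρ (a * S.t γ) * (S.η α * u)) * f (S.η α * u) := by
      funext u
      rw [hρsplit, mul_assoc]
    rw [hab, hkey, hint, Complex.real_smul, map_mul, hXinv, hXsplit, Complex.ofReal_inv]
    ring
  · -- the constant case
    have hle : S.one ≤ S.ν a + γ := S.one_min _ hcase
    rw [Jext_gen_const S μ Jext hJext hψ0 hf₂
        (hconst_of_le S hadd habs1 htriv haα (by rw [hcc]; exact hle)) hm2',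
      Jext_gen_const S μ Jext hJext hψ0 hf (hconst_of_le S hadd habs1 htriv ha hle) hm1]
    have hint := (habs f hf _ hηα).2
    rw [Complex.real_smul] at hint
    rw [hab, hint, hXinv, hXsplit, map_mul, Complex.ofReal_inv]
    ring

end Aux7
section Aux8

open MeasureTheory

variable {Γ F k : Type*} [AddCommGroup Γ] [LinearOrder Γ] [IsOrderedAddMonoid Γ] [Field F] [Field k]
  [TopologicalSpace k] [IsTopologicalRing k] [MeasurableSpace k] [BorelSpace k]
variable (S : LiftSetup Γ F k) (μ : Measure k) {ψ : F → ℂ} {abs : k → ℝ}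
variable (Jext : LFpsi S μ ψ →ₗ[CGamma Γ] CGamma Γ)

theorem Jext_scale
    (hJext : ∀ (f : k → ℂ) (hf : Integrable f μ) (a : F) (γ : Γ)
      (hmem : S.lift (fun u => embC Γ (f u)) a γ ∈ LFpsi S μ ψ),
      Jext ⟨S.lift (fun u => embC Γ (f u)) a γ, hmem⟩ = embC Γ (∫ u, f u ∂μ) * Xp γ)
    (hJinv : ∀ (g : F → CGamma Γ) (hg : g ∈ LFpsi S μ ψ) (τ : F)
      (hg' : (fun x => g (x + τ)) ∈ LFpsi S μ ψ),
      Jext ⟨fun x => g (x + τ), hg'⟩ = Jext ⟨g, hg⟩)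
    (hadd : ∀ x y : F, ψ (x + y) = ψ x * ψ y)
    (habs1 : ∀ x : F, ‖ψ x‖ = 1)
    (htriv : ∀ x ∈ S.integers, ψ (S.t S.one * x) = 1)
    {x₀ : F} (hx₀O : x₀ ∈ S.integers) (hx₀ : ψ x₀ ≠ 1)
    (ψbar : k → ℂ) (hψbarC : Continuous ψbar)
    (hspec' : ∀ x ∈ S.integers, ψbar (S.ρ x) = ψ x)
    (habs_pos : ∀ c : k, c ≠ 0 → 0 < abs c)
    (habs : ∀ (g : k → ℂ), Integrable g μ → ∀ c : k, c ≠ 0 →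
      Integrable (fun u => g (c * u)) μ ∧ (∫ u, g (c * u) ∂μ) = (abs c)⁻¹ • ∫ u, g u ∂μ)
    {α : F} (hα : α ≠ 0) :
    ∀ (g : F → CGamma Γ) (hg : g ∈ LFpsi S μ ψ)
      (hg2 : (fun x => g (α * x)) ∈ LFpsi S μ ψ),
      Jext ⟨fun x => g (α * x), hg2⟩ = (absF S abs α)⁻¹ * Jext ⟨g, hg⟩ := by
  have hscale : ∀ f : k → ℂ, Integrable f μ → ∀ c : k, c ≠ 0 →
      Integrable (fun u => f (c * u)) μ := fun f hf c hc => (habs f hf c hc).1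
  intro g hgL
  have hgs : g ∈ Submodule.span (CGamma Γ)
      {g | ∃ f : k → ℂ, Integrable f μ ∧ ∃ (a b : F) (γ : Γ),
        g = fun x => embC Γ (ψ (a * x)) * S.lift (fun u => embC Γ (f u)) b γ x} := by
    rw [← LFpsi_eq_span S μ ψ]; exact hgL
  revert hgL
  have : ∀ (hg : g ∈ LFpsi S μ ψ) (hg2 : (fun x => g (α * x)) ∈ LFpsi S μ ψ),
      Jext ⟨fun x => g (α * x), hg2⟩ = (absF S abs α)⁻¹ * Jext ⟨g, hg⟩ := ?_
  · intro hg; exact this hg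
  induction hgs using Submodule.span_induction with
  | mem g hgen =>
    intro hg hg2
    obtain ⟨f, hf, a, b, γ, rfl⟩ := hgen
    exact Jext_gen_scale S μ Jext hJext hJinv hadd habs1 htriv hx₀O hx₀ ψbar hψbarC
      hspec' habs_pos habs hα hf a b γ hg2 hg
  | zero =>
    intro hg hg2
    have e : (⟨fun x => (0 : F → CGamma Γ) (α * x), hg2⟩ : LFpsi S μ ψ) = 0 := Subtype.ext rfl
    have e2 : (⟨(0 : F → CGamma Γ), hg⟩ : LFpsi S μ ψ) = 0 := Subtype.ext rfl
    rw [e, e2, map_zero, mul_zero]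
  | add g h hgs hhs ihg ihh =>
    intro hg hg2
    have hgL : g ∈ LFpsi S μ ψ := by rw [LFpsi_eq_span S μ ψ]; exact hgs
    have hhL : h ∈ LFpsi S μ ψ := by rw [LFpsi_eq_span S μ ψ]; exact hhs
    have hg2L : (fun x => g (α * x)) ∈ LFpsi S μ ψ := scale_mem_LFpsi S μ hscale hα hgL
    have hh2L : (fun x => h (α * x)) ∈ LFpsi S μ ψ := scale_mem_LFpsi S μ hscale hα hhL
    have e : (⟨fun x => (g + h) (α * x), hg2⟩ : LFpsi S μ ψ) =
        ⟨fun x => g (α * x), hg2L⟩ + ⟨fun x => h (α * x), hh2L⟩ := Subtype.ext rfl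
    have e2 : (⟨g + h, hg⟩ : LFpsi S μ ψ) = ⟨g, hgL⟩ + ⟨h, hhL⟩ := Subtype.ext rfl
    rw [e, e2, map_add, map_add, ihg hgL hg2L, ihh hhL hh2L, mul_add]
  | smul c g hgs ihg =>
    intro hg hg2
    have hgL : g ∈ LFpsi S μ ψ := by rw [LFpsi_eq_span S μ ψ]; exact hgs
    have hg2L : (fun x => g (α * x)) ∈ LFpsi S μ ψ := scale_mem_LFpsi S μ hscale hα hgL
    have e : (⟨fun x => (c • g) (α * x), hg2⟩ : LFpsi S μ ψ) =
        c • ⟨fun x => g (α * x), hg2L⟩ := Subtype.ext rfl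
    have e2 : (⟨c • g, hg⟩ : LFpsi S μ ψ) = c • ⟨g, hgL⟩ := Subtype.ext rfl
    rw [e, e2, _root_.map_smul, _root_.map_smul, ihg hgL hg2L, smul_eq_mul, smul_eq_mul]
    ring

theorem Jext_unique [LocallyCompactSpace k] [μ.IsAddHaarMeasure]
    (hJext : ∀ (f : k → ℂ) (hf : Integrable f μ) (a : F) (γ : Γ)
      (hmem : S.lift (fun u => embC Γ (f u)) a γ ∈ LFpsi S μ ψ),
      Jext ⟨S.lift (fun u => embC Γ (f u)) a γ, hmem⟩ = embC Γ (∫ u, f u ∂μ) * Xp γ)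
    (hJinv : ∀ (g : F → CGamma Γ) (hg : g ∈ LFpsi S μ ψ) (τ : F)
      (hg' : (fun x => g (x + τ)) ∈ LFpsi S μ ψ),
      Jext ⟨fun x => g (x + τ), hg'⟩ = Jext ⟨g, hg⟩)
    (hadd : ∀ x y : F, ψ (x + y) = ψ x * ψ y)
    (habs1 : ∀ x : F, ‖ψ x‖ = 1)
    (htriv : ∀ x ∈ S.integers, ψ (S.t S.one * x) = 1)
    {x₀ : F} (hx₀O : x₀ ∈ S.integers) (hx₀ : ψ x₀ ≠ 1)
    (ψbar : k → ℂ) (hψbarC : Continuous ψbar)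
    (hspec' : ∀ x ∈ S.integers, ψbar (S.ρ x) = ψ x)
    (habs_pos : ∀ c : k, c ≠ 0 → 0 < abs c)
    (habs : ∀ (g : k → ℂ), Integrable g μ → ∀ c : k, c ≠ 0 →
      Integrable (fun u => g (c * u)) μ ∧ (∫ u, g (c * u) ∂μ) = (abs c)⁻¹ • ∫ u, g u ∂μ)
    {h₁ h₂ : F → CGamma Γ} (hm1 : h₁ ∈ LFpsi S μ ψ) (hm2 : h₂ ∈ LFpsi S μ ψ)
    (heq : ∀ x : F, x ≠ 0 → h₁ x = h₂ x) :
    Jext ⟨h₁, hm1⟩ = Jext ⟨h₂, hm2⟩ := by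
  have hd : h₁ - h₂ ∈ LFpsi S μ ψ := Submodule.sub_mem _ hm1 hm2
  have hdzero : ∀ x : F, x ≠ 0 → (h₁ - h₂) x = 0 := by
    intro x hx
    simp [heq x hx]
  set α₀ : F := S.t S.one with hα₀def
  have hα₀ : α₀ ≠ 0 := S.t_ne _
  have hCd : (fun x => (h₁ - h₂) (α₀ * x)) = h₁ - h₂ := by
    funext x
    by_cases hx : x = 0
    · rw [hx, mul_zero]
    · rw [hdzero _ hx, hdzero _ (mul_ne_zero hα₀ hx)]
  have hd2 : (fun x => (h₁ - h₂) (α₀ * x)) ∈ LFpsi S μ ψ := by rw [hCd]; exact hd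
  have hJ := Jext_scale S μ Jext hJext hJinv hadd habs1 htriv hx₀O hx₀ ψbar hψbarC
    hspec' habs_pos habs hα₀ (h₁ - h₂) hd hd2
  have e : (⟨fun x => (h₁ - h₂) (α₀ * x), hd2⟩ : LFpsi S μ ψ) = ⟨h₁ - h₂, hd⟩ :=
    Subtype.ext hCd
  rw [e] at hJ
  have habsF : absF S abs α₀ = Xp S.one := by
    have h1 : S.η α₀ = 1 := by
      rw [LiftSetup.η, hα₀def, S.ν_t, S.t_mul_t_neg, S.ρ_one]
    have h2 : abs (1 : k) = 1 :=
      abs_one_eq μ habs (exists_integral_ne_zero μ)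
    rw [absF, h1, h2, hα₀def, S.ν_t, Complex.ofReal_one, map_one, one_mul]
  have hne : ((Xp S.one : CGamma Γ))⁻¹ ≠ 1 := fun h =>
    (ne_of_gt S.one_pos) ((Xp_eq_one_iff S.one).mp (inv_eq_one.mp h))
  have hJd : Jext ⟨h₁ - h₂, hd⟩ = 0 := by
    rw [habsF] at hJ
    have e3 : (1 - (Xp S.one : CGamma Γ)⁻¹) * Jext ⟨h₁ - h₂, hd⟩ = 0 := by
      rw [sub_mul, one_mul, ← hJ, sub_self]
    rcases mul_eq_zero.mp e3 with h | h
    · exact absurd (sub_eq_zero.mp h).symm hne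
    · exact h
  have e4 : (⟨h₁, hm1⟩ : LFpsi S μ ψ) = ⟨h₁ - h₂, hd⟩ + ⟨h₂, hm2⟩ :=
    Subtype.ext (show h₁ = h₁ - h₂ + h₂ by rw [sub_add_cancel])
  rw [e4, map_add, hJd, zero_add]

end Aux8
open MeasureTheory in
/-- If `φ ∈ 𝓛(F^×,ψ)` and `α ∈ F^×`, then `x ↦ φ(αx)` belongs to
`𝓛(F^×,ψ)` and `∫^{F^×} φ(αx) d^×x = ∫^{F^×} φ(x) d^×x`. -/
theorem statement9
    {Γ F k : Type*} [AddCommGroup Γ] [LinearOrder Γ] [IsOrderedAddMonoid Γ] [Field F] [Field k]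
    [TopologicalSpace k] [IsTopologicalRing k] [LocallyCompactSpace k]
    [MeasurableSpace k] [BorelSpace k]
    (hk_nondiscrete : ¬ IsOpen ({0} : Set k))
    (μ : Measure k) [μ.IsAddHaarMeasure]
    (S : LiftSetup Γ F k)
    (ψ : F → ℂ) (hψ : S.IsGoodCharacter ψ S.one)
    -- the normalized absolute value on `k`:
    (abs : k → ℝ)
    (habs_pos : ∀ c : k, c ≠ 0 → 0 < abs c)
    (habs : ∀ (g : k → ℂ), Integrable g μ → ∀ c : k, c ≠ 0 →
      Integrable (fun u => g (c * u)) μ ∧ (∫ u, g (c * u) ∂μ) = (abs c)⁻¹ • ∫ u, g u ∂μ)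
    -- the translation-invariant extension of `∫^F` to `𝓛(F,ψ)`:
    (Jext : LFpsi S μ ψ →ₗ[CGamma Γ] CGamma Γ)
    (hJext : ∀ (f : k → ℂ) (hf : Integrable f μ) (a : F) (γ : Γ)
      (hmem : S.lift (fun u => embC Γ (f u)) a γ ∈ LFpsi S μ ψ),
      Jext ⟨S.lift (fun u => embC Γ (f u)) a γ, hmem⟩ = embC Γ (∫ u, f u ∂μ) * Xp γ)
    (hJinv : ∀ (g : F → CGamma Γ) (hg : g ∈ LFpsi S μ ψ) (τ : F)
      (hg' : (fun x => g (x + τ)) ∈ LFpsi S μ ψ),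
      Jext ⟨fun x => g (x + τ), hg'⟩ = Jext ⟨g, hg⟩)
    (φ : F → CGamma Γ) (hφ : MultIntegrable S μ ψ abs φ) (α : F) (hα : α ≠ 0) :
    MultIntegrable S μ ψ abs (fun x => φ (α * x)) ∧
    multIntegral S μ ψ abs Jext (fun x => φ (α * x)) = multIntegral S μ ψ abs Jext φ := by
  classical
  obtain ⟨hadd, habs1, htriv, ⟨x₀, hx₀O, hx₀'⟩, ψbar, hψbarC, hψbarspec⟩ := hψ
  have hx₀ : ψ x₀ ≠ 1 := by rwa [sub_self, S.t_zero, one_mul] at hx₀'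
  have hspec' : ∀ x ∈ S.integers, ψbar (S.ρ x) = ψ x := psibar_spec S hψbarspec
  have hscale : ∀ f : k → ℂ, Integrable f μ → ∀ c : k, c ≠ 0 →
      Integrable (fun u => f (c * u)) μ := fun f hf c hc => (habs f hf c hc).1
  have hgex := exists_integral_ne_zero (k := k) μ
  have habsm : ∀ {c d : k}, c ≠ 0 → d ≠ 0 → abs (c * d) = abs c * abs d :=
    fun hc hd => abs_mul_eq μ habs_pos habs hgex hc hd
  have hφ2 := hφ
  obtain ⟨h, hhmem, hhval⟩ := hφ2
  have hαF : absF S abs α ≠ 0 := absF_ne_zero S habs_pos hα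
  have hhαmem : (fun x => h (α * x)) ∈ LFpsi S μ ψ := scale_mem_LFpsi S μ hscale hα hhmem
  have hh'mem : (absF S abs α • fun x => h (α * x)) ∈ LFpsi S μ ψ :=
    Submodule.smul_mem _ _ hhαmem
  have hh'val : ∀ x : F, x ≠ 0 →
      (absF S abs α • fun x => h (α * x)) x = φ (α * x) * (absF S abs x)⁻¹ := by
    intro x hx
    have hαx : α * x ≠ 0 := mul_ne_zero hα hx
    have h1 := hhval (α * x) hαx
    have e : (absF S abs α • fun x => h (α * x)) x = absF S abs α * h (α * x) := rfl
    rw [e, h1, absF_mul S habsm hα hx, mul_inv]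
    have hxF : absF S abs x ≠ 0 := absF_ne_zero S habs_pos hx
    field_simp
  have hMI : MultIntegrable S μ ψ abs (fun x => φ (α * x)) :=
    ⟨_, hh'mem, hh'val⟩
  refine ⟨hMI, ?_⟩
  have L : multIntegral S μ ψ abs Jext (fun x => φ (α * x)) =
      Jext ⟨Classical.choose hMI, (Classical.choose_spec hMI).1⟩ := dif_pos hMI
  have R : multIntegral S μ ψ abs Jext φ =
      Jext ⟨Classical.choose hφ, (Classical.choose_spec hφ).1⟩ := dif_pos hφ
  rw [L, R]
  have hL2 : Jext ⟨Classical.choose hMI, (Classical.choose_spec hMI).1⟩ =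
      Jext ⟨absF S abs α • fun x => h (α * x), hh'mem⟩ := by
    refine Jext_unique S μ Jext hJext hJinv hadd habs1 htriv hx₀O hx₀ ψbar hψbarC
      hspec' habs_pos habs _ hh'mem ?_
    intro x hx
    rw [(Classical.choose_spec hMI).2 x hx, hh'val x hx]
  have hR2 : Jext ⟨Classical.choose hφ, (Classical.choose_spec hφ).1⟩ =
      Jext ⟨h, hhmem⟩ := by
    refine Jext_unique S μ Jext hJext hJinv hadd habs1 htriv hx₀O hx₀ ψbar hψbarC
      hspec' habs_pos habs _ hhmem ?_
    intro x hx
    rw [(Classical.choose_spec hφ).2 x hx, hhval x hx]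
  rw [hL2, hR2]
  have e2 : (⟨absF S abs α • fun x => h (α * x), hh'mem⟩ : LFpsi S μ ψ) =
      absF S abs α • ⟨fun x => h (α * x), hhαmem⟩ := Subtype.ext rfl
  rw [e2, _root_.map_smul, smul_eq_mul,
    Jext_scale S μ Jext hJext hJinv hadd habs1 htriv hx₀O hx₀ ψbar hψbarC hspec'
      habs_pos habs hα h hhmem hhαmem,
    ← mul_assoc, mul_inv_cancel₀ hαF, one_mul]
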